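/- arXiv:2601.21601 — 2 statements merged into one kernel-verified Lean document; each statement's English description precedes it below -/
import Mathlib

section
/- Let Q be a set closed under a binary operation ∧ and φ : Q → W a map into a real vector space with W = span{φ_p : p ∈ Q}. Let V be the free real vector space on Q, Φ : V → W the linear extension of φ, and for each q ∈ Q let T_q : V → V be the linear map with T_q(e_p) = e_{p∧q}. Assume (i) T_q(ker Φ) ⊆ ker Φ for all q, and (ii) φ_{p∧q} = φ_{q∧p} for all p, q. Then there exists a unique bilinear map F̃ : W × W → W with F̃(φ_p, φ_q) = φ_{p∧q} for all p, q ∈ Q, and F̃ is symmetric on W × W. -/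
theorem stmt_14 {Q W : Type*} [AddCommGroup W] [Module ℝ W]
    (conj : Q → Q → Q) (φ : Q → W)
    (hspan : Submodule.span ℝ (Set.range φ) = ⊤)
    (hker : ∀ q : Q, ∀ v ∈ LinearMap.ker (Finsupp.linearCombination ℝ φ),
        Finsupp.lmapDomain ℝ ℝ (fun p => conj p q) v ∈
          LinearMap.ker (Finsupp.linearCombination ℝ φ))
    (hsym : ∀ p q : Q, φ (conj p q) = φ (conj q p)) :
    (∃! F : W →ₗ[ℝ] W →ₗ[ℝ] W, ∀ p q : Q, F (φ p) (φ q) = φ (conj p q)) ∧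
    (∀ F : W →ₗ[ℝ] W →ₗ[ℝ] W,
      (∀ p q : Q, F (φ p) (φ q) = φ (conj p q)) → ∀ u v : W, F u v = F v u) := by
  classical
  set Φ : (Q →₀ ℝ) →ₗ[ℝ] W := Finsupp.linearCombination ℝ φ with hΦ
  have hsurj : Function.Surjective Φ := by
    rw [← LinearMap.range_eq_top, hΦ, Finsupp.range_linearCombination, hspan]
  -- uniqueness part (shared)
  have huniq : ∀ F G : W →ₗ[ℝ] W →ₗ[ℝ] W,
      (∀ p q : Q, F (φ p) (φ q) = φ (conj p q)) →
      (∀ p q : Q, G (φ p) (φ q) = φ (conj p q)) → F = G := by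
    intro F G hF hG
    apply LinearMap.ext_on hspan
    rintro _ ⟨p, rfl⟩
    apply LinearMap.ext_on hspan
    rintro _ ⟨q, rfl⟩
    rw [hF, hG]
  -- construct the bilinear map
  set D : (Q →₀ ℝ) →ₗ[ℝ] (Q →₀ ℝ) →ₗ[ℝ] W :=
    Finsupp.linearCombination ℝ
      (fun q : Q => Φ ∘ₗ Finsupp.lmapDomain ℝ ℝ (fun p => conj p q)) with hD
  have hDsingle : ∀ p q : Q, D (Finsupp.single q 1) (Finsupp.single p 1) = φ (conj p q) := by
    intro p q
    simp [hD, hΦ, Finsupp.mapDomain_single]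
  set B : (Q →₀ ℝ) →ₗ[ℝ] (Q →₀ ℝ) →ₗ[ℝ] W := D.flip with hB
  have hBsingle : ∀ p q : Q, B (Finsupp.single p 1) (Finsupp.single q 1) = φ (conj p q) := by
    intro p q; exact hDsingle p q
  have hBsym : B = B.flip := by
    refine Finsupp.lhom_ext' fun p => LinearMap.ext_ring ?_
    refine Finsupp.lhom_ext' fun q => LinearMap.ext_ring ?_
    simpa using (hBsingle p q).trans ((hsym p q).trans (hBsingle q p).symm)
  -- B kills ker Φ in the first argument
  have hBker1 : ∀ v ∈ LinearMap.ker Φ, B v = 0 := by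
    intro v hv
    refine Finsupp.lhom_ext' fun q => LinearMap.ext_ring ?_
    have : Φ (Finsupp.lmapDomain ℝ ℝ (fun p => conj p q) v) = 0 := hker q v hv
    simpa [hB, hD, hΦ] using this
  have hBker2 : ∀ v ∈ LinearMap.ker Φ, ∀ u, B u v = 0 := by
    intro v hv u
    have : B.flip v u = 0 := by rw [← hBsym]; rw [hBker1 v hv]; rfl
    simpa using this
  set e : ((Q →₀ ℝ) ⧸ LinearMap.ker Φ) ≃ₗ[ℝ] W := Φ.quotKerEquivOfSurjective hsurj with he
  have hemk : ∀ x : Q →₀ ℝ, e (Submodule.Quotient.mk x) = Φ x := fun x => rfl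
  have hesymm : ∀ x : Q →₀ ℝ, e.symm (Φ x) = Submodule.Quotient.mk x := by
    intro x
    rw [← hemk x, LinearEquiv.symm_apply_apply]
  have hle1 : LinearMap.ker Φ ≤ LinearMap.ker B :=
    fun v hv => LinearMap.mem_ker.2 (hBker1 v hv)
  set B₁ : ((Q →₀ ℝ) ⧸ LinearMap.ker Φ) →ₗ[ℝ] (Q →₀ ℝ) →ₗ[ℝ] W :=
    Submodule.liftQ _ B hle1 with hB₁
  set B₂ : W →ₗ[ℝ] (Q →₀ ℝ) →ₗ[ℝ] W := B₁ ∘ₗ e.symm.toLinearMap with hB₂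
  have hB₂Φ : ∀ x : Q →₀ ℝ, B₂ (Φ x) = B x := by
    intro x
    simp [hB₂, hesymm x, hB₁]
  have hle2 : LinearMap.ker Φ ≤ LinearMap.ker B₂.flip := by
    intro v hv
    rw [LinearMap.mem_ker]
    apply LinearMap.ext_on hspan
    rintro _ ⟨p, rfl⟩
    have : φ p = Φ (Finsupp.single p 1) := by simp [hΦ]
    rw [LinearMap.flip_apply, this, hB₂Φ]
    exact hBker2 v hv _
  set F₂ : ((Q →₀ ℝ) ⧸ LinearMap.ker Φ) →ₗ[ℝ] W →ₗ[ℝ] W :=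
    Submodule.liftQ _ B₂.flip hle2 with hF₂
  set F : W →ₗ[ℝ] W →ₗ[ℝ] W := F₂ ∘ₗ e.symm.toLinearMap with hF
  have hFprop : ∀ p q : Q, F (φ p) (φ q) = φ (conj p q) := by
    intro p q
    have hp : φ p = Φ (Finsupp.single p 1) := by simp [hΦ]
    have hq : φ q = Φ (Finsupp.single q 1) := by simp [hΦ]
    rw [hF]
    simp only [LinearMap.coe_comp, Function.comp_apply, LinearEquiv.coe_coe]
    rw [hp, hesymm, hF₂, Submodule.liftQ_apply, LinearMap.flip_apply, hq, hB₂Φ]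
    exact hBsingle q p |>.trans (hsym q p)
  refine ⟨⟨F, hFprop, fun G hG => huniq G F hG hFprop⟩, ?_⟩
  intro G hG u v
  have : G = G.flip := by
    apply huniq G G.flip hG
    intro p q
    rw [LinearMap.flip_apply, hG, hsym]
  conv_lhs => rw [this]
  rfl
end

section
/- Let Q be a set with an involution ¬ and a binary operation ∧, φ : Q → W a map into a real vector space, and F̃ : W × W → W a bilinear map with F̃(φ_p, φ_q) = φ_{p∧q} for all p, q. Suppose φ_{¬p} = -φ_p for all p and φ_{p∧p} = φ_p for all p. Then φ_q = 0 for every q ∈ Q that is a finite conjunction of elements of Q. In particular, if every element of Q is such a conjunction (e.g., q = q∧q), then φ is identically zero. -/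
theorem stmt_15 {Q W : Type*} [AddCommGroup W] [Module ℝ W]
    (neg : Q → Q) (hneg : ∀ q, neg (neg q) = q)
    (conj : Q → Q → Q) (φ : Q → W)
    (F : W →ₗ[ℝ] W →ₗ[ℝ] W)
    (hF : ∀ p q : Q, F (φ p) (φ q) = φ (conj p q))
    (hnegφ : ∀ p : Q, φ (neg p) = -φ p)
    (hidem : ∀ p : Q, φ (conj p p) = φ p) :
    ∀ q : Q, φ q = 0 := by
  intro q
  have key : F (-φ q) (-φ q) = F (φ q) (φ q) := by simp
  have h1 : -φ q = φ q := by
    calc -φ q = φ (neg q) := (hnegφ q).symm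
    _ = F (φ (neg q)) (φ (neg q)) := by rw [hF, hidem]
    _ = F (-φ q) (-φ q) := by rw [hnegφ]
    _ = F (φ q) (φ q) := key
    _ = φ q := by rw [hF, hidem]
  have h2 : (2 : ℝ) • φ q = 0 := by
    rw [two_smul]; nth_rewrite 1 [← h1]; abel
  simpa using smul_eq_zero.mp h2
end
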